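/- Suppose f : (0,b) → (0,∞) is monotone decreasing and ∫₀^b (f(x))^s dx < ∞ for some s > 0. Then the slide function σ_f is defined (finite) at every t ∈ [0, s/2], and σ_f is continuous from the right at 0 with σ_f(0) = 0. -/

import Mathlib

open MeasureTheory Set Filter Real Topology

lemma slide_rpow_int {b : ℝ} (hb : 0 < b) {r : ℝ} (hr : -1 < r) :
    IntegrableOn (fun x : ℝ => x ^ r) (Set.Ioo 0 b) := by
  have h := intervalIntegral.intervalIntegrable_rpow' (a := 0) (b := b) hr
  rwa [intervalIntegrable_iff_integrableOn_Ioo_of_le hb.le] at h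

lemma slide_abs_log_le {x : ℝ} (hx : 0 < x) :
    |Real.log x| ≤ 4 * (x ^ (4⁻¹ : ℝ) + x ^ (-(4⁻¹) : ℝ)) := by
  have h1 : Real.log x ≤ 4 * x ^ (4⁻¹ : ℝ) := by
    have := Real.log_le_rpow_div hx.le (by norm_num : (0:ℝ) < 4⁻¹)
    rw [div_eq_mul_inv] at this
    calc Real.log x ≤ x ^ (4⁻¹:ℝ) * (4⁻¹)⁻¹ := this
    _ = 4 * x ^ (4⁻¹:ℝ) := by ring
  have h2 : -Real.log x ≤ 4 * x ^ (-(4⁻¹) : ℝ) := by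
    have hxi : (0:ℝ) < x⁻¹ := by positivity
    have := Real.log_le_rpow_div hxi.le (by norm_num : (0:ℝ) < 4⁻¹)
    rw [div_eq_mul_inv, Real.log_inv, Real.inv_rpow hx.le, ← Real.rpow_neg hx.le] at this
    calc -Real.log x ≤ x ^ (-(4⁻¹:ℝ)) * (4⁻¹)⁻¹ := this
    _ = 4 * x ^ (-(4⁻¹:ℝ)) := by ring
  have hp : (0:ℝ) ≤ 4 * x ^ (4⁻¹ : ℝ) := by positivity
  have hp2 : (0:ℝ) ≤ 4 * x ^ (-(4⁻¹) : ℝ) := by positivity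
  rw [abs_le]; constructor <;> nlinarith

lemma slide_rpow_mul_log_int {b : ℝ} (hb : 0 < b) {r : ℝ} (hr : -1 < r - 4⁻¹) :
    IntegrableOn (fun x : ℝ => x ^ r * |Real.log x|) (Set.Ioo 0 b) := by
  have hmeas : AEStronglyMeasurable (fun x : ℝ => x ^ r * |Real.log x|)
      (volume.restrict (Set.Ioo 0 b)) :=
    (((by fun_prop : Measurable fun x : ℝ => x ^ r)).mul
      Real.measurable_log.abs).aestronglyMeasurable
  have hr' : -1 < r + 4⁻¹ := by linarith
  have hint : IntegrableOn (fun x : ℝ => 4 * (x ^ (r + 4⁻¹) + x ^ (r - 4⁻¹))) (Set.Ioo 0 b) :=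
    (((slide_rpow_int hb hr').add (slide_rpow_int hb hr)).const_mul 4)
  refine Integrable.mono' hint hmeas ?_
  filter_upwards [ae_restrict_mem measurableSet_Ioo] with x hx
  have hx0 : (0:ℝ) < x := hx.1
  have h1 : ‖x ^ r * |Real.log x|‖ = x ^ r * |Real.log x| := by
    rw [Real.norm_eq_abs, abs_of_nonneg (by positivity)]
  rw [h1]
  calc x ^ r * |Real.log x| ≤ x ^ r * (4 * (x ^ (4⁻¹:ℝ) + x ^ (-(4⁻¹):ℝ))) := by
        exact mul_le_mul_of_nonneg_left (slide_abs_log_le hx0) (by positivity)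
  _ = 4 * (x ^ (r + 4⁻¹) + x ^ (r - 4⁻¹)) := by
        rw [Real.rpow_add hx0, sub_eq_add_neg, Real.rpow_add hx0, Real.rpow_neg hx0.le]
        ring

lemma slide_log_abs_int {b : ℝ} (hb : 0 < b) :
    IntegrableOn (fun x : ℝ => |Real.log x|) (Set.Ioo 0 b) := by
  have h := slide_rpow_mul_log_int hb (r := 0) (by norm_num)
  refine h.congr_fun (fun x hx => ?_) measurableSet_Ioo
  simp [Real.rpow_zero]

lemma slide_log_int {b : ℝ} (hb : 0 < b) :
    IntegrableOn Real.log (Set.Ioo 0 b) := by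
  refine (slide_log_abs_int hb).mono' Real.measurable_log.aestronglyMeasurable ?_
  filter_upwards with x
  simp [Real.norm_eq_abs]

lemma slide_integral_log {b : ℝ} (hb : 0 < b) :
    ∫ x in Set.Ioo (0:ℝ) b, Real.log x = b * Real.log b - b := by
  have hii : IntervalIntegrable Real.log volume 0 b := by
    rw [intervalIntegrable_iff_integrableOn_Ioo_of_le hb.le]; exact slide_log_int hb
  have hF : ∀ x ∈ Set.Ioo (0:ℝ) b, HasDerivAt (fun y => y * Real.log y - y) (Real.log x) x := by
    intro x hx
    have := (Real.hasDerivAt_mul_log hx.1.ne').sub (hasDerivAt_id x)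
    simp at this; exact this
  have hcont : ContinuousOn (fun y => y * Real.log y - y) (Set.Icc 0 b) :=
    (Real.continuous_mul_log.sub continuous_id).continuousOn
  have h := intervalIntegral.integral_eq_sub_of_hasDerivAt_of_le hb.le hcont hF hii
  rw [intervalIntegral.integral_of_le hb.le, integral_Ioc_eq_integral_Ioo] at h
  simpa using h

/-- The slide function `σ_f(t)` of a function `f` on `(0,b)`:
`σ_f(t) = -1 - ∫₀^b (f(x)^t / A(t)) ln( x · f(x)^t / A(t) ) dx` where
`A(t) = ∫₀^b f(x)^t dx`. -/
noncomputable def slideFun (b : ℝ) (f : ℝ → ℝ) (t : ℝ) : ℝ :=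
  -1 - ∫ x in Set.Ioo (0:ℝ) b,
    (f x ^ t / ∫ y in Set.Ioo (0:ℝ) b, f y ^ t) *
      Real.log (x * (f x ^ t / ∫ y in Set.Ioo (0:ℝ) b, f y ^ t))

/-- `t` lies in the domain of the slide function of `f`: `t ≥ 0` and both `A(t)` and the
genial-entropy integral defining `σ_f(t)` exist. -/
def MemSlideDomain (b : ℝ) (f : ℝ → ℝ) (t : ℝ) : Prop :=
  0 ≤ t ∧ IntegrableOn (fun x => f x ^ t) (Set.Ioo (0:ℝ) b) ∧
    IntegrableOn
      (fun x => (f x ^ t / ∫ y in Set.Ioo (0:ℝ) b, f y ^ t) *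
        Real.log (x * (f x ^ t / ∫ y in Set.Ioo (0:ℝ) b, f y ^ t)))
      (Set.Ioo (0:ℝ) b)

/-- If `f : (0,b) → (0,∞)` is monotone decreasing with
`∫₀^b f(x)^s dx < ∞` for some `s > 0`, then `σ_f` is defined on `[0, s/2]`, is continuous
from the right at `0`, and `σ_f(0) = 0`. -/
theorem slideFun_defined_and_right_continuous (b s : ℝ) (hb : 0 < b) (hs : 0 < s)
    (f : ℝ → ℝ) (hmono : AntitoneOn f (Set.Ioo (0:ℝ) b))
    (hpos : ∀ x ∈ Set.Ioo (0:ℝ) b, 0 < f x)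
    (hfs : IntegrableOn (fun x => f x ^ s) (Set.Ioo (0:ℝ) b)) :
    (∀ t ∈ Set.Icc (0:ℝ) (s / 2), MemSlideDomain b f t) ∧
      ContinuousWithinAt (slideFun b f) (Set.Ici 0) 0 ∧
      slideFun b f 0 = 0 := by

  have hS : MeasurableSet (Set.Ioo (0:ℝ) b) := measurableSet_Ioo
  have hvol : volume (Set.Ioo (0:ℝ) b) < ⊤ := by
    simp [Real.volume_Ioo]
  have hconst : ∀ c : ℝ, IntegrableOn (fun _ : ℝ => c) (Set.Ioo (0:ℝ) b) := fun c =>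
    integrableOn_const hvol.ne
  have hint1 : ∫ _x in Set.Ioo (0:ℝ) b, (1:ℝ) = b := by
    simp [Real.volume_Ioo, ENNReal.toReal_ofReal hb.le, hb.le]
  have hfaem : AEMeasurable f (volume.restrict (Set.Ioo (0:ℝ) b)) :=
    aemeasurable_restrict_of_antitoneOn hS hmono
  have hmeasT : ∀ t : ℝ, AEStronglyMeasurable (fun x => f x ^ t)
      (volume.restrict (Set.Ioo (0:ℝ) b)) := by
    intro t
    exact (by fun_prop : AEMeasurable (fun x => f x ^ t)
      (volume.restrict (Set.Ioo (0:ℝ) b))).aestronglyMeasurable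
  -- the A-function
  have hA0 : (∫ y in Set.Ioo (0:ℝ) b, f y ^ (0:ℝ)) = b := by
    simp only [Real.rpow_zero]
    exact hint1
  -- measurability of the entropy integrand
  have hmeasH : ∀ t : ℝ, AEStronglyMeasurable
      (fun x => (f x ^ t / ∫ y in Set.Ioo (0:ℝ) b, f y ^ t) *
        Real.log (x * (f x ^ t / ∫ y in Set.Ioo (0:ℝ) b, f y ^ t)))
      (volume.restrict (Set.Ioo (0:ℝ) b)) := by
    intro t
    have h1 : AEMeasurable (fun x => f x ^ t / ∫ y in Set.Ioo (0:ℝ) b, f y ^ t)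
        (volume.restrict (Set.Ioo (0:ℝ) b)) := by fun_prop
    exact (h1.mul (Real.measurable_log.comp_aemeasurable
      (aemeasurable_id.mul h1))).aestronglyMeasurable
  set M : ℝ := ∫ y in Set.Ioo (0:ℝ) b, f y ^ s with hMdef
  have hM0 : 0 ≤ M :=
    setIntegral_nonneg hS fun y hy => Real.rpow_nonneg (hpos y hy).le s
  -- pointwise bound from monotonicity
  have hfsle : ∀ x ∈ Set.Ioo (0:ℝ) b, f x ^ s ≤ M / x := by
    intro x hx
    have h0 : ∫ _y in Set.Ioo (0:ℝ) x, f x ^ s = x * f x ^ s := by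
      simp [Real.volume_Ioo, ENNReal.toReal_ofReal hx.1.le, smul_eq_mul, hx.1.le]
    have h1 : ∫ _y in Set.Ioo (0:ℝ) x, f x ^ s ≤ ∫ y in Set.Ioo (0:ℝ) x, f y ^ s := by
      refine setIntegral_mono_on ((hconst _).mono_set (Set.Ioo_subset_Ioo_right hx.2.le))
        (hfs.mono_set (Set.Ioo_subset_Ioo_right hx.2.le)) measurableSet_Ioo ?_
      intro y hy
      ·
        have hyS : y ∈ Set.Ioo (0:ℝ) b := ⟨hy.1, hy.2.trans hx.2⟩
        exact Real.rpow_le_rpow (hpos x hx).le (hmono hyS hx hy.2.le) hs.le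
    have h2 : ∫ y in Set.Ioo (0:ℝ) x, f y ^ s ≤ M := by
      refine setIntegral_mono_set hfs ?_ ?_
      · filter_upwards [ae_restrict_mem hS] with y hy
        exact Real.rpow_nonneg (hpos y hy).le s
      · exact HasSubset.Subset.eventuallyLE (Set.Ioo_subset_Ioo_right hx.2.le)
    rw [le_div_iff₀ hx.1]
    calc f x ^ s * x = ∫ _y in Set.Ioo (0:ℝ) x, f x ^ s := by rw [h0]; ring
    _ ≤ M := h1.trans h2
  -- uniform domination of f^t
  have hG : ∀ t ∈ Set.Icc (0:ℝ) (s/2), ∀ x ∈ Set.Ioo (0:ℝ) b,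
      f x ^ t ≤ 1 + (M / x) ^ (2⁻¹ : ℝ) := by
    intro t ht x hx
    have hMx : (0:ℝ) ≤ M / x := div_nonneg hM0 hx.1.le
    rcases le_or_gt (f x) 1 with h | h
    · have : f x ^ t ≤ f x ^ (0:ℝ) :=
        Real.rpow_le_rpow_of_exponent_ge (hpos x hx) h ht.1
      rw [Real.rpow_zero] at this
      nlinarith [Real.rpow_nonneg hMx (2⁻¹ : ℝ)]
    · have h1 : f x ^ t ≤ f x ^ (s/2) :=
        Real.rpow_le_rpow_of_exponent_le h.le ht.2
      have h2 : f x ^ (s/2) = (f x ^ s) ^ (2⁻¹:ℝ) := by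
        rw [div_eq_mul_inv, Real.rpow_mul (hpos x hx).le]
      have h3 : (f x ^ s) ^ (2⁻¹:ℝ) ≤ (M / x) ^ (2⁻¹:ℝ) :=
        Real.rpow_le_rpow (Real.rpow_nonneg (hpos x hx).le s) (hfsle x hx) (by norm_num)
      nlinarith [h1, h2 ▸ h3]
  -- integrability of the dominating functions
  have hGeq : Set.EqOn (fun x : ℝ => 1 + (M / x) ^ (2⁻¹ : ℝ))
      (fun x : ℝ => 1 + M ^ (2⁻¹:ℝ) * x ^ (-(2⁻¹):ℝ)) (Set.Ioo (0:ℝ) b) := by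
    intro x hx
    simp only
    rw [div_eq_mul_inv, Real.mul_rpow hM0 (inv_nonneg.2 hx.1.le), ← Real.rpow_neg_one x,
      ← Real.rpow_mul hx.1.le]
    norm_num
  have hGint : IntegrableOn (fun x : ℝ => 1 + (M / x) ^ (2⁻¹ : ℝ)) (Set.Ioo (0:ℝ) b) := by
    refine IntegrableOn.congr_fun ?_ hGeq.symm hS
    exact (hconst 1).add ((slide_rpow_int hb (by norm_num)).const_mul _)
  have hGlogint : IntegrableOn (fun x : ℝ => (1 + (M / x) ^ (2⁻¹ : ℝ)) * |Real.log x|)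
      (Set.Ioo (0:ℝ) b) := by
    have hbase : IntegrableOn
        (fun x : ℝ => |Real.log x| + M ^ (2⁻¹:ℝ) * (x ^ (-(2⁻¹):ℝ) * |Real.log x|))
        (Set.Ioo (0:ℝ) b) :=
      (slide_log_abs_int hb).add ((slide_rpow_mul_log_int hb (by norm_num)).const_mul _)
    refine IntegrableOn.congr_fun hbase ?_ hS
    intro x hx
    have := hGeq hx
    simp only at this ⊢
    rw [this]
    ring
  -- lower bound for A t
  set m : ℝ := ∫ y in Set.Ioo (0:ℝ) b, min 1 (f y ^ s) with hmdef
  have hmint : IntegrableOn (fun y => min 1 (f y ^ s)) (Set.Ioo (0:ℝ) b) := by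
    refine Integrable.mono' (hconst 1) ?_ ?_
    · exact (aemeasurable_const.min (hmeasT s).aemeasurable).aestronglyMeasurable
    · filter_upwards [ae_restrict_mem hS] with y hy
      have h1 : 0 ≤ min 1 (f y ^ s) :=
        le_min zero_le_one (Real.rpow_nonneg (hpos y hy).le s)
      rw [Real.norm_eq_abs, abs_of_nonneg h1]
      exact min_le_left _ _
  have hmpos : 0 < m := by
    rw [hmdef]
    rw [integral_pos_iff_support_of_nonneg_ae ?_ hmint]
    · refine lt_of_lt_of_le ?_ (measure_mono ?_ :
        (volume.restrict (Set.Ioo (0:ℝ) b)) (Set.Ioo (0:ℝ) b) ≤ _)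
      · rw [Measure.restrict_apply_self]
        simp [Real.volume_Ioo]
        exact hb
      · intro y hy
        have : 0 < min 1 (f y ^ s) :=
          lt_min one_pos (Real.rpow_pos_of_pos (hpos y hy) s)
        exact fun h => this.ne' h
    · filter_upwards [ae_restrict_mem hS] with y hy
      exact le_min zero_le_one (Real.rpow_nonneg (hpos y hy).le s)
  -- f^t bounded by 1 + f^s and below by min 1 f^s, for t ∈ [0, s/2]
  have hub : ∀ t ∈ Set.Icc (0:ℝ) (s/2), ∀ x ∈ Set.Ioo (0:ℝ) b, f x ^ t ≤ 1 + f x ^ s := by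
    intro t ht x hx
    have hts : t ≤ s := ht.2.trans (by linarith)
    rcases le_or_gt (f x) 1 with h | h
    · have : f x ^ t ≤ f x ^ (0:ℝ) :=
        Real.rpow_le_rpow_of_exponent_ge (hpos x hx) h ht.1
      rw [Real.rpow_zero] at this
      nlinarith [Real.rpow_nonneg (hpos x hx).le s]
    · have : f x ^ t ≤ f x ^ s := Real.rpow_le_rpow_of_exponent_le h.le hts
      linarith
  have hlb : ∀ t ∈ Set.Icc (0:ℝ) (s/2), ∀ x ∈ Set.Ioo (0:ℝ) b,
      min 1 (f x ^ s) ≤ f x ^ t := by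
    intro t ht x hx
    have hts : t ≤ s := ht.2.trans (by linarith)
    rcases le_or_gt (f x) 1 with h | h
    · refine (min_le_right _ _).trans ?_
      exact Real.rpow_le_rpow_of_exponent_ge (hpos x hx) h hts
    · refine (min_le_left _ _).trans ?_
      have : f x ^ (0:ℝ) ≤ f x ^ t := Real.rpow_le_rpow_of_exponent_le h.le ht.1
      rwa [Real.rpow_zero] at this
  -- integrability of f^t
  have hintT : ∀ t ∈ Set.Icc (0:ℝ) (s/2),
      IntegrableOn (fun x => f x ^ t) (Set.Ioo (0:ℝ) b) := by
    intro t ht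
    refine Integrable.mono' ((hconst 1).add hfs) (hmeasT t) ?_
    filter_upwards [ae_restrict_mem hS] with x hx
    rw [Real.norm_eq_abs, abs_of_nonneg (Real.rpow_nonneg (hpos x hx).le t)]
    exact hub t ht x hx
  -- bounds on A t
  have hAub : ∀ t ∈ Set.Icc (0:ℝ) (s/2), (∫ y in Set.Ioo (0:ℝ) b, f y ^ t) ≤ b + M := by
    intro t ht
    calc (∫ y in Set.Ioo (0:ℝ) b, f y ^ t) ≤ ∫ y in Set.Ioo (0:ℝ) b, (1 + f y ^ s) :=
      setIntegral_mono_on (hintT t ht) ((hconst 1).add hfs) hS (hub t ht)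
    _ = b + M := by
      rw [integral_add (hconst 1) hfs, hint1]
  have hAlb : ∀ t ∈ Set.Icc (0:ℝ) (s/2), m ≤ ∫ y in Set.Ioo (0:ℝ) b, f y ^ t := by
    intro t ht
    exact setIntegral_mono_on hmint (hintT t ht) hS (hlb t ht)
  have hApos : ∀ t ∈ Set.Icc (0:ℝ) (s/2), 0 < ∫ y in Set.Ioo (0:ℝ) b, f y ^ t :=
    fun t ht => hmpos.trans_le (hAlb t ht)
  -- |log (A t)| is uniformly bounded
  set K : ℝ := max |Real.log m| |Real.log (b + M)| with hKdef
  have hlogA : ∀ t ∈ Set.Icc (0:ℝ) (s/2),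
      |Real.log (∫ y in Set.Ioo (0:ℝ) b, f y ^ t)| ≤ K := by
    intro t ht
    refine abs_le_max_abs_abs ?_ ?_
    · exact Real.log_le_log hmpos (hAlb t ht)
    · exact Real.log_le_log (hApos t ht) (hAub t ht)
  have hK0 : 0 ≤ K := le_trans (abs_nonneg _) (le_max_left _ _)
  -- entropy-type bound
  have hent : ∀ t ∈ Set.Icc (0:ℝ) (s/2), ∀ x ∈ Set.Ioo (0:ℝ) b,
      f x ^ t * |Real.log (f x ^ t)| ≤ 1 + f x ^ s := by
    intro t ht x hx
    have hfx : 0 < f x := hpos x hx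
    rcases le_or_gt (f x) 1 with h | h
    · have hv0 : 0 < f x ^ t := Real.rpow_pos_of_pos hfx t
      have hv1 : f x ^ t ≤ 1 := Real.rpow_le_one hfx.le h ht.1
      have := Real.abs_log_mul_self_lt (f x ^ t) hv0 hv1
      have heq : f x ^ t * |Real.log (f x ^ t)| = |Real.log (f x ^ t) * (f x ^ t)| := by
        rw [abs_mul, abs_of_nonneg hv0.le]; ring
      nlinarith [Real.rpow_nonneg hfx.le s]
    · have hlog : Real.log (f x ^ t) = t * Real.log (f x) := Real.log_rpow hfx t
      have hl0 : 0 ≤ Real.log (f x) := Real.log_nonneg h.le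
      have habs : |Real.log (f x ^ t)| = t * Real.log (f x) := by
        rw [hlog, abs_of_nonneg (mul_nonneg ht.1 hl0)]
      have h1 : f x ^ t ≤ f x ^ (s/2) := Real.rpow_le_rpow_of_exponent_le h.le ht.2
      have h2 : t * Real.log (f x) ≤ f x ^ (s/2) := by
        have hld : Real.log (f x) ≤ f x ^ (s/2) / (s/2) :=
          Real.log_le_rpow_div hfx.le (by linarith)
        calc t * Real.log (f x) ≤ (s/2) * (f x ^ (s/2) / (s/2)) := by
              apply mul_le_mul ht.2 hld hl0 (by linarith)
        _ = f x ^ (s/2) := by field_simp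
      have h3 : f x ^ (s/2) * (f x ^ (s/2)) = f x ^ s := by
        rw [← Real.rpow_add hfx]; norm_num
      rw [habs]
      calc f x ^ t * (t * Real.log (f x)) ≤ f x ^ (s/2) * (f x ^ (s/2)) := by
            apply mul_le_mul h1 h2 (mul_nonneg ht.1 hl0) (Real.rpow_nonneg hfx.le _)
      _ = f x ^ s := h3
      _ ≤ 1 + f x ^ s := by linarith
  -- the master bound
  have hB : ∀ t ∈ Set.Icc (0:ℝ) (s/2), ∀ x ∈ Set.Ioo (0:ℝ) b,
      ‖(f x ^ t / ∫ y in Set.Ioo (0:ℝ) b, f y ^ t) *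
        Real.log (x * (f x ^ t / ∫ y in Set.Ioo (0:ℝ) b, f y ^ t))‖ ≤
      ((1 + (M/x) ^ (2⁻¹:ℝ)) * |Real.log x| + (1 + f x ^ s) +
        K * (1 + (M/x) ^ (2⁻¹:ℝ))) / m := by
    intro t ht x hx
    have hu : 0 < f x ^ t := Real.rpow_pos_of_pos (hpos x hx) t
    have ha : 0 < ∫ y in Set.Ioo (0:ℝ) b, f y ^ t := hApos t ht
    have hG' : f x ^ t ≤ 1 + (M/x) ^ (2⁻¹:ℝ) := hG t ht x hx
    have hGpos : (0:ℝ) ≤ 1 + (M/x) ^ (2⁻¹:ℝ) := le_trans hu.le hG'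
    have hL : |Real.log (x * (f x ^ t / ∫ y in Set.Ioo (0:ℝ) b, f y ^ t))| ≤
        |Real.log x| + (|Real.log (f x ^ t)| +
          |Real.log (∫ y in Set.Ioo (0:ℝ) b, f y ^ t)|) := by
      rw [Real.log_mul hx.1.ne' (div_pos hu ha).ne', Real.log_div hu.ne' ha.ne']
      exact (abs_add_le _ _).trans (add_le_add le_rfl (abs_sub _ _))
    have e1 : f x ^ t * |Real.log x| ≤ (1 + (M/x) ^ (2⁻¹:ℝ)) * |Real.log x| :=
      mul_le_mul_of_nonneg_right hG' (abs_nonneg _)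
    have e2 : f x ^ t * |Real.log (f x ^ t)| ≤ 1 + f x ^ s := hent t ht x hx
    have e3 : f x ^ t * |Real.log (∫ y in Set.Ioo (0:ℝ) b, f y ^ t)| ≤
        K * (1 + (M/x) ^ (2⁻¹:ℝ)) := by
      have := mul_le_mul hG' (hlogA t ht) (abs_nonneg _) hGpos
      linarith
    calc ‖(f x ^ t / ∫ y in Set.Ioo (0:ℝ) b, f y ^ t) *
        Real.log (x * (f x ^ t / ∫ y in Set.Ioo (0:ℝ) b, f y ^ t))‖
        = (f x ^ t / ∫ y in Set.Ioo (0:ℝ) b, f y ^ t) *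
          |Real.log (x * (f x ^ t / ∫ y in Set.Ioo (0:ℝ) b, f y ^ t))| := by
          rw [Real.norm_eq_abs, abs_mul, abs_of_nonneg (div_nonneg hu.le ha.le)]
    _ ≤ (f x ^ t / ∫ y in Set.Ioo (0:ℝ) b, f y ^ t) *
          (|Real.log x| + (|Real.log (f x ^ t)| +
            |Real.log (∫ y in Set.Ioo (0:ℝ) b, f y ^ t)|)) :=
          mul_le_mul_of_nonneg_left hL (div_nonneg hu.le ha.le)
    _ = (f x ^ t * (|Real.log x| + (|Real.log (f x ^ t)| +
            |Real.log (∫ y in Set.Ioo (0:ℝ) b, f y ^ t)|))) /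
          (∫ y in Set.Ioo (0:ℝ) b, f y ^ t) := by ring
    _ ≤ (f x ^ t * (|Real.log x| + (|Real.log (f x ^ t)| +
            |Real.log (∫ y in Set.Ioo (0:ℝ) b, f y ^ t)|))) / m := by
          apply div_le_div_of_nonneg_left (by positivity) hmpos (hAlb t ht)
    _ ≤ ((1 + (M/x) ^ (2⁻¹:ℝ)) * |Real.log x| + (1 + f x ^ s) +
          K * (1 + (M/x) ^ (2⁻¹:ℝ))) / m := by
          exact (div_le_div_iff_of_pos_right hmpos).2 (by nlinarith [e1, e2, e3])
  have hBint : IntegrableOn (fun x =>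
      ((1 + (M/x) ^ (2⁻¹:ℝ)) * |Real.log x| + (1 + f x ^ s) +
        K * (1 + (M/x) ^ (2⁻¹:ℝ))) / m) (Set.Ioo (0:ℝ) b) :=
    ((hGlogint.add ((hconst 1).add hfs)).add (hGint.const_mul K)).div_const m
  -- Part 1 : the domain contains [0, s/2]
  have part1 : ∀ t ∈ Set.Icc (0:ℝ) (s/2), MemSlideDomain b f t := by
    intro t ht
    refine ⟨ht.1, hintT t ht, ?_⟩
    refine Integrable.mono' hBint (hmeasH t) ?_
    filter_upwards [ae_restrict_mem hS] with x hx
    exact hB t ht x hx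
  -- the value at 0
  have hkey0 : ∫ x in Set.Ioo (0:ℝ) b,
      (f x ^ (0:ℝ) / ∫ y in Set.Ioo (0:ℝ) b, f y ^ (0:ℝ)) *
        Real.log (x * (f x ^ (0:ℝ) / ∫ y in Set.Ioo (0:ℝ) b, f y ^ (0:ℝ))) = -1 := by
    have heq : Set.EqOn (fun x => (f x ^ (0:ℝ) / ∫ y in Set.Ioo (0:ℝ) b, f y ^ (0:ℝ)) *
        Real.log (x * (f x ^ (0:ℝ) / ∫ y in Set.Ioo (0:ℝ) b, f y ^ (0:ℝ))))
        (fun x => b⁻¹ * Real.log x - b⁻¹ * Real.log b) (Set.Ioo (0:ℝ) b) := by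
      intro x hx
      simp only [Real.rpow_zero, hint1]
      rw [one_div, Real.log_mul hx.1.ne' (inv_ne_zero hb.ne'), Real.log_inv]
      ring
    rw [setIntegral_congr_fun hS heq,
      integral_sub ((slide_log_int hb).const_mul b⁻¹) (hconst _),
      integral_const_mul, slide_integral_log hb]
    rw [setIntegral_const, measureReal_def, Real.volume_Ioo, smul_eq_mul, sub_zero,
      ENNReal.toReal_ofReal hb.le]
    field_simp
    ring
  have hzero : slideFun b f 0 = 0 := by
    unfold slideFun
    rw [hkey0]
    norm_num
  -- right-continuity at 0
  have hIccmem : Set.Icc (0:ℝ) (s/2) ∈ 𝓝[Set.Ici (0:ℝ)] (0:ℝ) := by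
    have h1 : Set.Iic (s/2) ∈ 𝓝 (0:ℝ) := Iic_mem_nhds (by linarith)
    refine Filter.mem_of_superset
      (Filter.inter_mem self_mem_nhdsWithin (mem_nhdsWithin_of_mem_nhds h1)) ?_
    intro y hy
    exact ⟨hy.1, hy.2⟩
  have htendA : Tendsto (fun t => ∫ y in Set.Ioo (0:ℝ) b, f y ^ t) (𝓝[Set.Ici (0:ℝ)] 0)
      (𝓝 (∫ y in Set.Ioo (0:ℝ) b, f y ^ (0:ℝ))) := by
    apply tendsto_integral_filter_of_dominated_convergence (fun y => 1 + f y ^ s)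
    · exact Filter.Eventually.of_forall hmeasT
    · filter_upwards [hIccmem] with t ht
      filter_upwards [ae_restrict_mem hS] with x hx
      rw [Real.norm_eq_abs, abs_of_nonneg (Real.rpow_nonneg (hpos x hx).le t)]
      exact hub t ht x hx
    · exact (hconst 1).add hfs
    · filter_upwards [ae_restrict_mem hS] with x hx
      exact (Real.continuousAt_const_rpow (hpos x hx).ne').continuousWithinAt
  have hcont : ContinuousWithinAt (slideFun b f) (Set.Ici 0) 0 := by
    have hval : Tendsto (fun t => ∫ x in Set.Ioo (0:ℝ) b,
        (f x ^ t / ∫ y in Set.Ioo (0:ℝ) b, f y ^ t) *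
          Real.log (x * (f x ^ t / ∫ y in Set.Ioo (0:ℝ) b, f y ^ t)))
        (𝓝[Set.Ici (0:ℝ)] 0)
        (𝓝 (∫ x in Set.Ioo (0:ℝ) b,
          (f x ^ (0:ℝ) / ∫ y in Set.Ioo (0:ℝ) b, f y ^ (0:ℝ)) *
            Real.log (x * (f x ^ (0:ℝ) / ∫ y in Set.Ioo (0:ℝ) b, f y ^ (0:ℝ))))) := by
      apply tendsto_integral_filter_of_dominated_convergence (fun x =>
        ((1 + (M/x) ^ (2⁻¹:ℝ)) * |Real.log x| + (1 + f x ^ s) +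
          K * (1 + (M/x) ^ (2⁻¹:ℝ))) / m)
      · exact Filter.Eventually.of_forall hmeasH
      · filter_upwards [hIccmem] with t ht
        filter_upwards [ae_restrict_mem hS] with x hx
        exact hB t ht x hx
      · exact hBint
      · filter_upwards [ae_restrict_mem hS] with x hx
        have h1 : Tendsto (fun t : ℝ => f x ^ t) (𝓝[Set.Ici (0:ℝ)] 0)
            (𝓝 (f x ^ (0:ℝ))) :=
          (Real.continuousAt_const_rpow (hpos x hx).ne').continuousWithinAt
        have h2 : Tendsto (fun t : ℝ => f x ^ t / ∫ y in Set.Ioo (0:ℝ) b, f y ^ t)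
            (𝓝[Set.Ici (0:ℝ)] 0)
            (𝓝 (f x ^ (0:ℝ) / ∫ y in Set.Ioo (0:ℝ) b, f y ^ (0:ℝ))) :=
          h1.div htendA (by rw [hA0]; exact hb.ne')
        have h3 : Tendsto (fun t : ℝ => x * (f x ^ t / ∫ y in Set.Ioo (0:ℝ) b, f y ^ t))
            (𝓝[Set.Ici (0:ℝ)] 0)
            (𝓝 (x * (f x ^ (0:ℝ) / ∫ y in Set.Ioo (0:ℝ) b, f y ^ (0:ℝ)))) :=
          tendsto_const_nhds.mul h2
        have hxpos : 0 < x * (f x ^ (0:ℝ) / ∫ y in Set.Ioo (0:ℝ) b, f y ^ (0:ℝ)) := by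
          rw [hA0, Real.rpow_zero]
          have := hx.1
          positivity
        have h4 := (Real.continuousAt_log hxpos.ne').tendsto.comp h3
        exact h2.mul h4
    unfold ContinuousWithinAt slideFun
    exact tendsto_const_nhds.sub hval
  exact ⟨part1, hcont, hzero⟩
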